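/- Let S be a compact metrizable space equipped with a closed partial order. If X, Y are S-valued random variables with X ≤ Y almost surely and the law of X stochastically dominates the law of Y (i.e., P[X ∈ A] ≥ P[Y ∈ A] for all closed increasing sets A), then X = Y almost surely. -/

import Mathlib

open MeasureTheory

/-- Comparison principle: on a compact metrizable space `S` with a closed partial order,
if `X ≤ Y` a.s. and the law of `X` stochastically dominates the law of `Y`
(`P[X ∈ A] ≥ P[Y ∈ A]` for all closed increasing sets `A`), then `X = Y` a.s. -/
theorem stmt13 {Ω S : Type*} [MeasurableSpace Ω]
    [MetricSpace S] [CompactSpace S] [PartialOrder S]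
    [MeasurableSpace S] [BorelSpace S]
    (hclosed : IsClosed {p : S × S | p.1 ≤ p.2})
    (P : Measure Ω) [IsProbabilityMeasure P]
    (X Y : Ω → S) (hX : Measurable X) (hY : Measurable Y)
    (hle : ∀ᵐ ω ∂P, X ω ≤ Y ω)
    (hdom : ∀ A : Set S, IsClosed A → (∀ x ∈ A, ∀ y, x ≤ y → y ∈ A) →
      P (Y ⁻¹' A) ≤ P (X ⁻¹' A)) :
    ∀ᵐ ω ∂P, X ω = Y ω := by
  obtain ⟨B, hBc, -, hB⟩ := TopologicalSpace.exists_countable_basis S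
  set up : Set S → Set S := fun s => {z | ∃ u ∈ closure s, u ≤ z} with hup
  have hupClosed : ∀ s : Set S, IsClosed (up s) := by
    intro s
    have h1 : IsClosed {p : S × S | p.1 ∈ closure s ∧ p.1 ≤ p.2} :=
      (isClosed_closure.preimage continuous_fst).inter hclosed
    have heq : up s = (fun p : S × S => p.2) '' {p | p.1 ∈ closure s ∧ p.1 ≤ p.2} := by
      ext z
      constructor
      · rintro ⟨u, hu, huz⟩; exact ⟨(u, z), ⟨hu, huz⟩, rfl⟩
      · rintro ⟨⟨u, z'⟩, ⟨hu, huz⟩, rfl⟩; exact ⟨u, hu, huz⟩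
    rw [heq]
    exact (h1.isCompact.image continuous_snd).isClosed
  have hupInc : ∀ s : Set S, ∀ x ∈ up s, ∀ y, x ≤ y → y ∈ up s := by
    rintro s x ⟨u, hu, hux⟩ y hxy; exact ⟨u, hu, hux.trans hxy⟩
  -- each bad set is null
  have hnull : ∀ U ∈ B, P (Y ⁻¹' up U \ X ⁻¹' up U) = 0 := by
    intro U _
    set A := up U
    have hAm : MeasurableSet A := (hupClosed U).measurableSet
    have hXA : MeasurableSet (X ⁻¹' A) := hX hAm
    have hYA : MeasurableSet (Y ⁻¹' A) := hY hAm
    have hle0 : P {ω | ¬ X ω ≤ Y ω} = 0 := MeasureTheory.ae_iff.mp hle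
    have h1 : P (X ⁻¹' A \ Y ⁻¹' A) = 0 :=
      measure_mono_null (fun ω hω h => hω.2 (hupInc U _ hω.1 _ h)) hle0
    have h2 : P (X ⁻¹' A ∩ Y ⁻¹' A) = P (X ⁻¹' A) := by
      have := measure_inter_add_diff (μ := P) (X ⁻¹' A) hYA
      rw [h1, add_zero] at this
      exact this
    have h3 : P (Y ⁻¹' A ∩ X ⁻¹' A) + P (Y ⁻¹' A \ X ⁻¹' A) = P (Y ⁻¹' A) :=
      measure_inter_add_diff (μ := P) (Y ⁻¹' A) hXA
    have hd : P (Y ⁻¹' A) ≤ P (X ⁻¹' A) := hdom A (hupClosed U) (hupInc U)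
    have h4 : P (Y ⁻¹' A ∩ X ⁻¹' A) + P (Y ⁻¹' A \ X ⁻¹' A) ≤ P (Y ⁻¹' A ∩ X ⁻¹' A) := by
      rw [h3, Set.inter_comm, h2]; exact hd
    have hfin : P (Y ⁻¹' A ∩ X ⁻¹' A) ≠ ⊤ := measure_ne_top P _
    have := ENNReal.le_of_add_le_add_left hfin (by simpa [add_comm] using h4 : P (Y ⁻¹' A ∩ X ⁻¹' A) + P (Y ⁻¹' A \ X ⁻¹' A) ≤ P (Y ⁻¹' A ∩ X ⁻¹' A) + 0)
    exact le_antisymm (by simpa using this) zero_le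
  have hae : ∀ᵐ ω ∂P, ∀ U ∈ B, ¬ (Y ω ∈ up U ∧ X ω ∉ up U) := by
    rw [MeasureTheory.ae_ball_iff hBc]
    intro U hU
    refine MeasureTheory.ae_iff.mpr ?_
    refine measure_mono_null (fun ω hω => ?_) (hnull U hU)
    simp only [Set.mem_setOf_eq, not_not] at hω
    exact ⟨hω.1, hω.2⟩
  filter_upwards [hle, hae] with ω hxy hsep
  by_contra hne
  have hnyx : ¬ Y ω ≤ X ω := fun h => hne (le_antisymm hxy h)
  -- separate
  have hVopen : IsOpen {u : S | ¬ u ≤ X ω} := by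
    have : IsClosed {u : S | u ≤ X ω} :=
      hclosed.preimage (Continuous.prodMk continuous_id continuous_const)
    exact this.isOpen_compl
  have hyV : Y ω ∈ {u : S | ¬ u ≤ X ω} := hnyx
  obtain ⟨t, htmem, htc, hts⟩ :=
    exists_mem_nhds_isClosed_subset (hVopen.mem_nhds hyV)
  obtain ⟨U, hUB, hyU, hUt⟩ :=
    hB.exists_subset_of_mem_open (mem_interior_iff_mem_nhds.mpr htmem) isOpen_interior
  have hclU : closure U ⊆ {u : S | ¬ u ≤ X ω} := by
    calc closure U ⊆ closure (interior t) := closure_mono hUt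
    _ ⊆ closure t := closure_mono interior_subset
    _ = t := htc.closure_eq
    _ ⊆ _ := hts
  refine hsep U hUB ⟨⟨Y ω, subset_closure hyU, le_rfl⟩, ?_⟩
  rintro ⟨u, huU, hux⟩
  exact hclU huU hux
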